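/- Let φ : A₀ → A₁ be a surjective linear map with kernel V ⊆ A₀, and let L ⊆ A₀ ⊕ A₀* be a Lagrangian subspace. Then φ^!(φ_!(L)) = (L ∩ V^⊥) + V, where V is identified with V ⊕ 0 ⊆ A₀ ⊕ A₀* and V^⊥ is the orthogonal with respect to the canonical pairing. -/

import Mathlib

open Module LinearMap

noncomputable def pairingP (A : Type*) [AddCommGroup A] [Module ℝ A] :
    (A × Module.Dual ℝ A) →ₗ[ℝ] (A × Module.Dual ℝ A) →ₗ[ℝ] ℝ :=
  LinearMap.mk₂ ℝ (fun x y => x.2 y.1 + y.2 x.1)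
    (fun x x' y => by simp; ring)
    (fun c x y => by simp; ring)
    (fun x y y' => by simp; ring)
    (fun c x y => by simp; ring)

noncomputable def orth {A : Type*} [AddCommGroup A] [Module ℝ A]
    (E : Submodule ℝ (A × Module.Dual ℝ A)) : Submodule ℝ (A × Module.Dual ℝ A) :=
  ⨅ e ∈ E, LinearMap.ker (pairingP A e)

def IsLagrangian {A : Type*} [AddCommGroup A] [Module ℝ A]
    (E : Submodule ℝ (A × Module.Dual ℝ A)) : Prop := E = orth E

noncomputable def omegaOrth {A : Type*} [AddCommGroup A] [Module ℝ A]
    (ω : A →ₗ[ℝ] A →ₗ[ℝ] ℝ) (B : Submodule ℝ A) : Submodule ℝ A :=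
  ⨅ b ∈ B, LinearMap.ker (ω.flip b)

noncomputable def grForm {A : Type*} [AddCommGroup A] [Module ℝ A]
    (ω : A →ₗ[ℝ] A →ₗ[ℝ] ℝ) : A →ₗ[ℝ] A × Module.Dual ℝ A :=
  LinearMap.prod LinearMap.id ω

noncomputable def inlA (A : Type*) [AddCommGroup A] [Module ℝ A] :
    A →ₗ[ℝ] A × Module.Dual ℝ A := LinearMap.inl ℝ A (Module.Dual ℝ A)

noncomputable def gaugeMap {A : Type*} [AddCommGroup A] [Module ℝ A]
    (ω : A →ₗ[ℝ] A →ₗ[ℝ] ℝ) : (A × Module.Dual ℝ A) →ₗ[ℝ] (A × Module.Dual ℝ A) :=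
  LinearMap.prod (LinearMap.fst ℝ A _) (LinearMap.snd ℝ A _ + ω ∘ₗ LinearMap.fst ℝ A _)

noncomputable def tauMap {A₀ A₁ : Type*} [AddCommGroup A₀] [Module ℝ A₀]
    [AddCommGroup A₁] [Module ℝ A₁] (φ : A₀ →ₗ[ℝ] A₁) :
    (A₀ × Module.Dual ℝ A₁) →ₗ[ℝ] (A₀ × Module.Dual ℝ A₀) :=
  LinearMap.prod (LinearMap.fst ℝ A₀ _) (φ.dualMap ∘ₗ LinearMap.snd ℝ A₀ _)

noncomputable def sigMap {A₀ A₁ : Type*} [AddCommGroup A₀] [Module ℝ A₀]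
    [AddCommGroup A₁] [Module ℝ A₁] (φ : A₀ →ₗ[ℝ] A₁) :
    (A₀ × Module.Dual ℝ A₁) →ₗ[ℝ] (A₁ × Module.Dual ℝ A₁) :=
  LinearMap.prod (φ ∘ₗ LinearMap.fst ℝ A₀ _) (LinearMap.snd ℝ A₀ _)

noncomputable def pullLag {A₀ A₁ : Type*} [AddCommGroup A₀] [Module ℝ A₀]
    [AddCommGroup A₁] [Module ℝ A₁] (φ : A₀ →ₗ[ℝ] A₁)
    (L₁ : Submodule ℝ (A₁ × Module.Dual ℝ A₁)) : Submodule ℝ (A₀ × Module.Dual ℝ A₀) :=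
  Submodule.map (tauMap φ) (Submodule.comap (sigMap φ) L₁)

noncomputable def pushLag {A₀ A₁ : Type*} [AddCommGroup A₀] [Module ℝ A₀]
    [AddCommGroup A₁] [Module ℝ A₁] (φ : A₀ →ₗ[ℝ] A₁)
    (L₀ : Submodule ℝ (A₀ × Module.Dual ℝ A₀)) : Submodule ℝ (A₁ × Module.Dual ℝ A₁) :=
  Submodule.map (sigMap φ) (Submodule.comap (tauMap φ) L₀)


theorem stmt9 {A₀ A₁ : Type*} [AddCommGroup A₀] [Module ℝ A₀] [FiniteDimensional ℝ A₀]
    [AddCommGroup A₁] [Module ℝ A₁] [FiniteDimensional ℝ A₁]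
    (φ : A₀ →ₗ[ℝ] A₁) (hφ : Function.Surjective φ)
    (L : Submodule ℝ (A₀ × Module.Dual ℝ A₀)) (hL : IsLagrangian L) :
    pullLag φ (pushLag φ L)
      = (L ⊓ orth (Submodule.map (inlA A₀) (LinearMap.ker φ)))
        ⊔ Submodule.map (inlA A₀) (LinearMap.ker φ) := by
  have horth : ∀ z : A₀ × Module.Dual ℝ A₀,
      z ∈ orth (Submodule.map (inlA A₀) (LinearMap.ker φ)) ↔
        ∀ v ∈ LinearMap.ker φ, z.2 v = 0 := by
    intro z
    simp only [orth, Submodule.mem_iInf, LinearMap.mem_ker]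
    constructor
    · intro h v hv
      have := h (inlA A₀ v) ⟨v, hv, rfl⟩
      simpa [pairingP, inlA] using this
    · intro h e he
      obtain ⟨v, hv, rfl⟩ := he
      simpa [pairingP, inlA] using h v hv
  ext ⟨u, ζ⟩
  constructor
  · rintro ⟨⟨u₀, ξ⟩, hmem, heq⟩
    obtain ⟨⟨w, ξ'⟩, hwL, hsig⟩ := hmem
    have hwL' : (w, φ.dualMap ξ') ∈ L := hwL
    simp only [sigMap, tauMap, LinearMap.prod_apply, Function.prod, LinearMap.coe_comp,
      Function.comp_apply, LinearMap.fst_apply, LinearMap.snd_apply, Prod.mk.injEq] at hsig heq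
    obtain ⟨hφw, hξ'⟩ := hsig
    obtain ⟨hu, hζ⟩ := heq
    refine Submodule.mem_sup.mpr ⟨(w, φ.dualMap ξ'), ⟨hwL', ?_⟩,
      (u - w, 0), ⟨u - w, ?_, rfl⟩, ?_⟩
    · exact (horth _).mpr fun v hv => by simp [LinearMap.mem_ker.mp hv]
    · simp [LinearMap.mem_ker, map_sub, ← hu, hφw]
    · simp [inlA, Prod.ext_iff, hξ', ← hζ]
  · intro h
    obtain ⟨⟨a, β⟩, ⟨haL, hann⟩, y, hy, heq⟩ := Submodule.mem_sup.mp h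
    obtain ⟨v, hv, rfl⟩ := hy
    have hβ : β ∈ (LinearMap.ker φ).dualAnnihilator := by
      rw [Submodule.mem_dualAnnihilator]
      exact (horth _).mp hann
    rw [← LinearMap.range_dualMap_eq_dualAnnihilator_ker] at hβ
    obtain ⟨ξ, hξ⟩ := hβ
    have h1 : u = a + v ∧ ζ = β := by
      simp only [inlA, LinearMap.inl_apply, Prod.mk_add_mk, add_zero, Prod.mk.injEq] at heq
      exact ⟨heq.1.symm, heq.2.symm⟩
    obtain ⟨hu, hζ⟩ := h1
    refine ⟨(u, ξ), ⟨(a, ξ), ?_, ?_⟩, ?_⟩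
    · show tauMap φ (a, ξ) ∈ L
      have : tauMap φ (a, ξ) = (a, β) := by simp [tauMap, hξ]
      rw [this]; exact haL
    · simp [sigMap, hu, map_add, LinearMap.mem_ker.mp hv]
    · simp [tauMap, hζ, hξ]
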